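/- In the case $n = 3$ (three rows), for any four monomials $w_1,w_2,w_3,w_4$ in variables $x_1,\dots,x_m$, the following identity of polarized power sums holds: $6[w_1w_2w_3w_4] = 2[w_1w_2w_3][w_4] + 2[w_1w_2w_4][w_3] + 2[w_1w_3w_4][w_2] + 2[w_2w_3w_4][w_1] + [w_1w_2][w_3w_4] + [w_1w_3][w_2w_4] + [w_1w_4][w_2w_3] - [w_1w_2][w_3][w_4] - [w_1w_3][w_2][w_4] - [w_1w_4][w_2][w_3] - [w_2w_3][w_1][w_4] - [w_2w_4][w_1][w_3] - [w_3w_4][w_1][w_2] + [w_1][w_2][w_3][w_4]$. -/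
import Mathlib


open MvPolynomial

/-- The polarized power sum `[w]` for `n = 3`, where `w` is the monomial with
exponent vector `α`. -/
noncomputable def pp3 (m : ℕ) (α : Fin m → ℕ) : MvPolynomial (Fin 3 × Fin m) ℂ :=
  ∑ i : Fin 3, ∏ j : Fin m, X (i, j) ^ α j

private noncomputable def mon3 (m : ℕ) (i : Fin 3) (α : Fin m → ℕ) :
    MvPolynomial (Fin 3 × Fin m) ℂ :=
  ∏ j : Fin m, X (i, j) ^ α j

private lemma mon3_add (m : ℕ) (i : Fin 3) (α β : Fin m → ℕ) :
    mon3 m i (α + β) = mon3 m i α * mon3 m i β := by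
  simp [mon3, pow_add, Finset.prod_mul_distrib]

private lemma pp3_eq (m : ℕ) (α : Fin m → ℕ) :
    pp3 m α = mon3 m 0 α + mon3 m 1 α + mon3 m 2 α := by
  simp [pp3, mon3, Fin.sum_univ_three]

/-- the fundamental relation `Ψ₄(w₁,w₂,w₃,w₄) = 0` for `n = 3`. -/
theorem fundamental_relation_three (m : ℕ) (a b c d : Fin m → ℕ) :
    6 * pp3 m (a + b + c + d)
    = 2 * pp3 m (a + b + c) * pp3 m d + 2 * pp3 m (a + b + d) * pp3 m c
      + 2 * pp3 m (a + c + d) * pp3 m b + 2 * pp3 m (b + c + d) * pp3 m a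
      + pp3 m (a + b) * pp3 m (c + d) + pp3 m (a + c) * pp3 m (b + d)
      + pp3 m (a + d) * pp3 m (b + c)
      - pp3 m (a + b) * pp3 m c * pp3 m d - pp3 m (a + c) * pp3 m b * pp3 m d
      - pp3 m (a + d) * pp3 m b * pp3 m c - pp3 m (b + c) * pp3 m a * pp3 m d
      - pp3 m (b + d) * pp3 m a * pp3 m c - pp3 m (c + d) * pp3 m a * pp3 m b
      + pp3 m a * pp3 m b * pp3 m c * pp3 m d := by
  simp only [pp3_eq, mon3_add]
  ring
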